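/- The problem of intensional equivalence between propositional recursive programs is at least as hard as graph isomorphism: there is a polynomial-time computable map E ↦ prog(E) from finite directed graphs to irreducible propositional programs such that two graphs E, F on n nodes are isomorphic if and only if prog(E) and prog(F) are globally intensionally equivalent, if and only if prog(E) and prog(F) are congruent. -/

import Mathlib

namespace McCarthy

/-- Sorts: individual (`ind`) and Boolean (`bool`). -/
inductive Srt where
  | ind | bool
deriving DecidableEq

/-- A function variable is identified by its sort, arity and index. -/
abbrev FV : Type := Srt × ℕ × ℕ

/-- Explicit terms over a vocabulary `Φ`. -/
inductive Term (Φ : Type) where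
  | tt : Term Φ
  | ff : Term Φ
  | ivar : ℕ → Term Φ
  | fapp : FV → List (Term Φ) → Term Φ
  | prim : Φ → List (Term Φ) → Term Φ
  | cond : Srt → Term Φ → Term Φ → Term Φ → Term Φ

variable {Φ : Type}

def isIvar : Term Φ → Bool
  | .ivar _ => true
  | _ => false

/-- Immediate terms: individual variables, or function variables applied to
individual variables (nullary function variables included). -/
def isImmediate : Term Φ → Bool
  | .ivar _ => true
  | .fapp p args => (args.all isIvar) && (args.length == p.2.1)
  | _ => false

/-- Irreducible terms: immediate terms, Boolean constants, or applications
with immediate arguments. -/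
def isIrreducible : Term Φ → Bool
  | .tt => true
  | .ff => true
  | .ivar _ => true
  | .fapp p args => ((args.all isIvar) && (args.length == p.2.1)) || args.all isImmediate
  | .prim _ args => args.all isImmediate
  | .cond _ a b c => isImmediate a && isImmediate b && isImmediate c

/-- The sort of an immediate (or irreducible non-`prim`) term. -/
def immSort : Term Φ → Srt
  | .tt => .bool
  | .ff => .bool
  | .fapp p _ => p.1
  | .cond s _ _ _ => s
  | _ => .ind

mutual
/-- `sizeT E` counts the occurrences of non-immediate proper subterms of `E`. -/
def sizeT : Term Φ → ℕ
  | .tt => 0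
  | .ff => 0
  | .ivar _ => 0
  | .fapp _ args => sizeTL args
  | .prim _ args => sizeTL args
  | .cond _ a b c =>
      (sizeT a + (if isImmediate a then 0 else 1)) +
      (sizeT b + (if isImmediate b then 0 else 1)) +
      (sizeT c + (if isImmediate c then 0 else 1))

def sizeTL : List (Term Φ) → ℕ
  | [] => 0
  | t :: ts => (sizeT t + (if isImmediate t then 0 else 1)) + sizeTL ts
end

mutual
/-- Renaming of function variables. -/
def renameF (ρ : FV → FV) : Term Φ → Term Φ
  | .tt => .tt
  | .ff => .ff
  | .ivar i => .ivar i
  | .fapp p args => .fapp (ρ p) (renameFL ρ args)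
  | .prim f args => .prim f (renameFL ρ args)
  | .cond s a b c => .cond s (renameF ρ a) (renameF ρ b) (renameF ρ c)

def renameFL (ρ : FV → FV) : List (Term Φ) → List (Term Φ)
  | [] => []
  | t :: ts => renameF ρ t :: renameFL ρ ts
end

mutual
/-- Renaming of individual variables. -/
def renameV (σ : ℕ → ℕ) : Term Φ → Term Φ
  | .tt => .tt
  | .ff => .ff
  | .ivar i => .ivar (σ i)
  | .fapp p args => .fapp p (renameVL σ args)
  | .prim f args => .prim f (renameVL σ args)
  | .cond s a b c => .cond s (renameV σ a) (renameV σ b) (renameV σ c)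

def renameVL (σ : ℕ → ℕ) : List (Term Φ) → List (Term Φ)
  | [] => []
  | t :: ts => renameV σ t :: renameVL σ ts
end

mutual
/-- Does the function variable `q` occur in the term? -/
def occursF (q : FV) : Term Φ → Bool
  | .tt => false
  | .ff => false
  | .ivar _ => false
  | .fapp p args => (decide (p = q)) || occursFL q args
  | .prim _ args => occursFL q args
  | .cond _ a b c => occursF q a || occursF q b || occursF q c

def occursFL (q : FV) : List (Term Φ) → Bool
  | [] => false
  | t :: ts => occursF q t || occursFL q ts
end


/-! ## Extended recursive programs -/

/-- A body equation `p(x⃗) = rhs`. -/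
structure Eqn (Φ : Type) where
  p : FV
  xs : List ℕ
  rhs : Term Φ

/-- An extended recursive program `E₀(x⃗) where { p₁(x⃗₁) = E₁, …, p_K(x⃗_K) = E_K }`,
with the body represented as a multiset (set representation of the paper). -/
structure ExtProg (Φ : Type) where
  fvars : List ℕ
  head : Term Φ
  body : Multiset (Eqn Φ)

/-- The function variables bound by the body of a program. -/
def bodyPvars (E : ExtProg Φ) : Multiset FV := E.body.map Eqn.p

/-- `q` is fresh for `E`: it is not a recursion variable of `E` and occurs nowhere in `E`. -/
def FreshIn (q : FV) (E : ExtProg Φ) : Prop :=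
  occursF q E.head = false ∧ ∀ e ∈ E.body, e.p ≠ q ∧ occursF q e.rhs = false

/-- The argument list of an application term (the empty list otherwise). -/
def argsOf : Term Φ → List (Term Φ)
  | .fapp _ as => as
  | .prim _ as => as
  | .cond _ a b c => [a, b, c]
  | _ => []

/-- Replace the argument list of an application term. -/
def withArgs : Term Φ → List (Term Φ) → Term Φ
  | .fapp p _, as => .fapp p as
  | .prim f _, as => .prim f as
  | .cond s _ _ _, [a, b, c] => .cond s a b c
  | t, _ => t

def isApp : Term Φ → Bool
  | .fapp _ _ => true
  | .prim _ _ => true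
  | .cond _ _ _ _ => true
  | _ => false

/-- Labels `(p, j, q)` of arrow reductions. -/
abbrev Lbl : Type := FV × ℕ × FV

/-- The arrow-reduction relation `E(x⃗) →^{(p,j,q)} F(x⃗)` on extended programs:
either a non-immediate `j`-th argument of the (outermost application) right-hand side
of the body equation for `p` is split off into a new equation for the fresh variable `q`
(body case), or — when `p` is fresh, serving merely as a marker — the non-immediate
`j`-th argument of the head is split off (head case). -/
inductive Step : Lbl → ExtProg Φ → ExtProg Φ → Prop where
  | body (p : FV) (j : ℕ) (q : FV) (E F : ExtProg Φ) (s : Multiset (Eqn Φ)) (e : Eqn Φ)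
      (G : Term Φ)
      (hbody : E.body = s + {e}) (hp : e.p = p) (happ : isApp e.rhs = true)
      (hG : (argsOf e.rhs)[j]? = some G) (himm : isImmediate G = false)
      (hq : FreshIn q E) (har : q.2.1 = e.xs.length)
      (hF : F = ⟨E.fvars, E.head,
        s + {⟨p, e.xs, withArgs e.rhs ((argsOf e.rhs).set j (.fapp q (e.xs.map Term.ivar)))⟩,
             ⟨q, e.xs, G⟩}⟩) :
      Step (p, j, q) E F
  | head (p : FV) (j : ℕ) (q : FV) (E F : ExtProg Φ) (G : Term Φ)
      (hp : FreshIn p E) (hq : FreshIn q E) (hpq : p ≠ q) (happ : isApp E.head = true)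
      (hG : (argsOf E.head)[j]? = some G) (himm : isImmediate G = false)
      (har : q.2.1 = E.fvars.length)
      (hF : F = ⟨E.fvars,
        withArgs E.head ((argsOf E.head).set j (.fapp q (E.fvars.map Term.ivar))),
        E.body + {⟨q, E.fvars, G⟩}⟩) :
      Step (p, j, q) E F

/-- One-step reduction: arrow reduction for some label. -/
def Step1 (E F : ExtProg Φ) : Prop := ∃ l : Lbl, Step l E F

/-- The `~_E` relation on function variables used in the Amalgamation Lemma:
`p ~_E p'` iff both are the same recursion variable of `E` (body case) or
neither is a recursion variable of `E` (head case). -/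
def SameCase (E : ExtProg Φ) (p p' : FV) : Prop :=
  (p = p' ∧ p ∈ bodyPvars E) ∨ (p ∉ bodyPvars E ∧ p' ∉ bodyPvars E)

/-- Size of an extended program: total number of occurrences of non-immediate
proper subterms of its parts. -/
def sizeP (E : ExtProg Φ) : ℕ := sizeT E.head + (E.body.map (fun e => sizeT e.rhs)).sum

/-- An extended program is irreducible if all its parts are irreducible terms. -/
def IrrProg (E : ExtProg Φ) : Prop :=
  isIrreducible E.head = true ∧ ∀ e ∈ E.body, isIrreducible e.rhs = true

/-! ## Congruence -/

/-- `ρ` preserves sorts and arities of function variables. -/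
def SortArityPres (ρ : FV → FV) : Prop := ∀ v : FV, (ρ v).1 = v.1 ∧ (ρ v).2.1 = v.2.1

/-- One equation is obtained from another by renaming the (bound) individual
variables and applying a renaming `ρ` of the function variables. -/
def EqnCong (ρ : FV → FV) (e f : Eqn Φ) : Prop :=
  f.p = ρ e.p ∧ ∃ σ : ℕ → ℕ,
    (∀ a ∈ e.xs, ∀ b ∈ e.xs, σ a = σ b → a = b) ∧
    f.xs = e.xs.map σ ∧ f.rhs = renameV σ (renameF ρ e.rhs)

/-- Congruence of extended programs: an alphabetic change of the bound individual
and function variables together with a permutation of the body equations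
(the latter being automatic in the multiset representation). -/
def Congruent (E F : ExtProg Φ) : Prop :=
  ∃ ρ : FV → FV, Function.Bijective ρ ∧ SortArityPres ρ ∧
    (∀ p : FV, p ∉ bodyPvars E → ρ p = p) ∧
    F.fvars = E.fvars ∧ F.head = renameF ρ E.head ∧
    Multiset.Rel (EqnCong ρ) E.body F.body

/-- Full reduction: a (possibly empty) chain of one-step reductions followed by a
congruence, i.e. `E ≡_c F` or `E →₁ ⋯ →₁ F' ≡_c F`. -/
def Reduces (E F : ExtProg Φ) : Prop :=
  ∃ G : ExtProg Φ, Relation.ReflTransGen Step1 E G ∧ Congruent G F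


/-! ## Semantics -/

section Semantics

variable {A : Type}

/-- An environment for the function variables: a partial function
`Aⁿ ⇀ A ⊕ Bool` for each function variable (`none` = divergence). -/
abbrev Env (A : Type) : Type := FV → List A → Option (A ⊕ Bool)

/-- A `Φ`-structure on the universe `A`: a partial interpretation of each
primitive (`Sum.inl` for sort `ind`, `Sum.inr` for sort `bool`). -/
abbrev Struc (Φ A : Type) : Type := Φ → List A → Option (A ⊕ Bool)

/-- An environment is sort- and arity-respecting. -/
def GoodEnv (env : Env A) : Prop :=
  ∀ p : FV, ∀ as v, env p as = some v →
    as.length = p.2.1 ∧ (p.1 = Srt.ind → ∃ a, v = Sum.inl a) ∧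
    (p.1 = Srt.bool → ∃ b, v = Sum.inr b)

/-- A structure is sort- and arity-respecting. -/
def GoodStruc (St : Struc Φ A) (arΦ : Φ → ℕ) (sΦ : Φ → Srt) : Prop :=
  ∀ φ as v, St φ as = some v →
    as.length = arΦ φ ∧ (sΦ φ = Srt.ind → ∃ a, v = Sum.inl a) ∧
    (sΦ φ = Srt.bool → ∃ b, v = Sum.inr b)

/-- A structure is total (on arguments of the right arity). -/
def TotalStruc (St : Struc Φ A) (arΦ : Φ → ℕ) : Prop :=
  ∀ φ as, as.length = arΦ φ → (St φ as).isSome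

mutual
/-- Kleene evaluation of terms: `none` means divergence; arguments of
applications are evaluated strictly and must be of sort `ind`; the conditional
evaluates its test first and then the selected branch. -/
def eval (St : Struc Φ A) (iv : ℕ → A) (env : Env A) : Term Φ → Option (A ⊕ Bool)
  | .tt => some (Sum.inr true)
  | .ff => some (Sum.inr false)
  | .ivar i => some (Sum.inl (iv i))
  | .fapp p args =>
      match evalArgs St iv env args with
      | none => none
      | some as => env p as
  | .prim f args =>
      match evalArgs St iv env args with
      | none => none
      | some as => St f as
  | .cond _ a b c =>
      match eval St iv env a with
      | some (Sum.inr true) => eval St iv env b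
      | some (Sum.inr false) => eval St iv env c
      | _ => none

def evalArgs (St : Struc Φ A) (iv : ℕ → A) (env : Env A) :
    List (Term Φ) → Option (List A)
  | [] => some []
  | t :: ts =>
      match eval St iv env t with
      | some (Sum.inl a) =>
          match evalArgs St iv env ts with
          | some as => some (a :: as)
          | none => none
      | _ => none
end

/-- Validity of the identity `E = F` in the structure: Kleene strong equality
under every assignment of individuals to the individual variables and of
sort-respecting partial functions to the function variables. -/
def Valid (St : Struc Φ A) (E F : Term Φ) : Prop :=
  ∀ (iv : ℕ → A) (env : Env A), GoodEnv env → eval St iv env E = eval St iv env F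

/-- An individual variable is *placed* in the identity
`φ(zs₁) = ψ(zs₂)` if it is one of the listed immediate arguments. -/
def Placed (zs₁ zs₂ : List (Term Φ)) (s : ℕ) : Prop := Term.ivar s ∈ zs₁ ++ zs₂

/-- Injective validity `A ⊨_inj φ(zs₁) = ψ(zs₂)`: validity under all
assignments which are injective on the placed individual variables. -/
def ValidInjId (St : Struc Φ A) (φ ψ : Φ) (zs₁ zs₂ : List (Term Φ)) : Prop :=
  ∀ (iv : ℕ → A) (env : Env A), GoodEnv env →
    (∀ s t, Placed zs₁ zs₂ s → Placed zs₁ zs₂ t → iv s = iv t → s = t) →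
    eval St iv env (.prim φ zs₁) = eval St iv env (.prim ψ zs₂)

/-- Bind the variables `xs` to the values `as` on top of the assignment `iv`. -/
def bindList (xs : List ℕ) (as : List A) (iv : ℕ → A) (i : ℕ) : A :=
  match xs.findIdx? (· = i) with
  | some k => as.getD k (iv i)
  | none => iv i

/-- `env` solves the system of recursive equations in the body of `E`. -/
def Solves (St : Struc Φ A) (iv : ℕ → A) (E : ExtProg Φ) (env : Env A) : Prop :=
  ∀ e ∈ E.body, ∀ as : List A, as.length = e.xs.length →
    env e.p as = eval St (bindList e.xs as iv) env e.rhs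

/-- The pointwise partial-function (information) ordering on environments. -/
def envLE (env env' : Env A) : Prop :=
  ∀ p as, env p as = none ∨ env p as = env' p as

/-- `Den St iv E w` : the denotation of the extended program `E` at the
assignment `iv` is `w`, computed by evaluating the head at the least solution
of the body. -/
def Den (St : Struc Φ A) (iv : ℕ → A) (E : ExtProg Φ) (w : Option (A ⊕ Bool)) : Prop :=
  ∃ env : Env A, Solves St iv E env ∧ (∀ env', Solves St iv E env' → envLE env env') ∧
    eval St iv env E.head = w

/-! ## Recursors and intensions -/

/-- The renaming of individual variables matching the list `xs` with the list `ys`. -/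
def bindRen (xs ys : List ℕ) (i : ℕ) : ℕ :=
  match xs.findIdx? (· = i) with
  | some k => ys.getD k i
  | none => i

/-- The parts of two irreducible programs define the same functional, modulo the
renaming `ρ` of the recursion variables and the matching of the bound individual
variables. -/
def EqnSemEq (St : Struc Φ A) (ρ : FV → FV) (e f : Eqn Φ) : Prop :=
  e.p = ρ f.p ∧ e.xs.length = f.xs.length ∧
  ∀ (iv : ℕ → A) (env : Env A), GoodEnv env →
    eval St iv env e.rhs = eval St iv env (renameV (bindRen f.xs e.xs) (renameF ρ f.rhs))

/-- The recursors of `E` and `F` on the structure are equal (strongly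
isomorphic): the bodies match up to a sort- and arity-preserving bijection of the
recursion variables, with the corresponding parts denoting the same functionals. -/
def RecEq (St : Struc Φ A) (E F : ExtProg Φ) : Prop :=
  ∃ ρ : FV → FV, Function.Bijective ρ ∧ SortArityPres ρ ∧
    (∀ (iv : ℕ → A) (env : Env A), GoodEnv env →
      eval St iv env E.head = eval St iv env (renameF ρ F.head)) ∧
    Multiset.Rel (EqnSemEq St ρ) E.body F.body

/-- Intensional equivalence on a structure: the referential intensions (the
recursors of the canonical forms) of the two programs are equal. -/
def IntEqOn (St : Struc Φ A) (E F : ExtProg Φ) : Prop :=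
  ∃ E' F' : ExtProg Φ, Reduces E E' ∧ IrrProg E' ∧ Reduces F F' ∧ IrrProg F' ∧
    RecEq St E' F'

end Semantics

/-- Global intensional equivalence: equal referential intensions in every
infinite `Φ`-structure. -/
def GlobalIntEq (E F : ExtProg Φ) : Prop :=
  ∀ (A : Type) (St : Struc Φ A), Infinite A → IntEqOn St E F

/-- A program is proper if none of its parts is an immediate term of Boolean sort. -/
def ProperProg (E : ExtProg Φ) : Prop :=
  ¬(isImmediate E.head = true ∧ immSort E.head = Srt.bool) ∧
  ∀ e ∈ E.body, ¬(isImmediate e.rhs = true ∧ immSort e.rhs = Srt.bool)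


/-! ## Pure algebraic terms (Statement 0) -/

/-- Pure algebraic terms: built only from individual variables and function
variables of sort `ind` (of the correct arities) by application. -/
inductive PureAlg : Term Φ → Prop where
  | ivar (i : ℕ) : PureAlg (.ivar i)
  | fapp (n i : ℕ) (args : List (Term Φ)) (hargs : ∀ t ∈ args, PureAlg t)
      (hlen : args.length = n) : PureAlg (.fapp (Srt.ind, n, i) args)

/-! ## Bare identities (Statements 14, 16) -/

/-- A term is an individual variable or a nullary function variable of sort `ind`. -/
def BareVarT (t : Term Φ) : Prop :=
  (∃ i, t = Term.ivar i) ∨ (∃ i, t = Term.fapp (Srt.ind, 0, i) [])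

/-- A bare variable: `(false, i)` codes the individual variable `v_i`,
`(true, i)` codes the nullary function variable `p^{ind,0}_i`. -/
abbrev BareVar : Type := Bool × ℕ

/-- Canonical choice of bare variables: each variable occurring for the first
time is the first unused variable of its kind in the fixed alternating list
`v₀, p₀, v₁, p₁, …`. -/
def CanonicalBare (xs : List BareVar) : Prop :=
  ∀ i x, xs[i]? = some x → (∀ j < i, xs[j]? ≠ some x) →
    x.2 = (((xs.take i).filter (fun y => y.1 == x.1)).dedup).length

/-- The representative function of an equivalence relation `r` on the placed
variables: a placed variable is sent to the least element of its class. -/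
noncomputable def repFun (placed : ℕ → Prop) (r : ℕ → ℕ → Prop) (s : ℕ) : ℕ :=
  open Classical in
  if placed s then sInf {j | r s j} else s

/-! ## Propositional programs coding graphs (Statement 19) -/

/-- The propositional variable `r`. -/
def rVar : FV := (Srt.bool, 0, 0)

/-- The propositional variable `p_i`. -/
def pVar (n : ℕ) (i : Fin n) : FV := (Srt.bool, 0, 1 + (i : ℕ))

/-- The propositional variable `p_{ij}`. -/
def pijVar (n : ℕ) (i j : Fin n) : FV := (Srt.bool, 0, 1 + n + ((i : ℕ) * n + (j : ℕ)))

/-- The part `E_{ij}` of the program coding the graph `E`. -/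
def edgeTerm (n : ℕ) (E : Fin n → Fin n → Bool) (i j : Fin n) : Term Empty :=
  if E i j then
    .cond Srt.bool (.fapp (pVar n i) []) (.fapp (pVar n j) []) (.fapp rVar [])
  else
    .cond Srt.bool (.fapp (pVar n i) []) (.fapp rVar []) (.fapp (pVar n j) [])

/-- The irreducible propositional program `prog(E)` coding the graph `E`:
`true where { p_i = p_i : i < n } ∪ { p_{ij} = E_{ij} : i,j < n } ∪ { r = false }`. -/
def graphProg (n : ℕ) (E : Fin n → Fin n → Bool) : ExtProg Empty where
  fvars := []
  head := .tt
  body :=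
    (Finset.univ.val.map (fun i : Fin n => (⟨pVar n i, [], .fapp (pVar n i) []⟩ : Eqn Empty)))
    + ((Finset.univ.val (α := Fin n × Fin n)).map
        (fun ij => (⟨pijVar n ij.1 ij.2, [], edgeTerm n E ij.1 ij.2⟩ : Eqn Empty)))
    + {⟨rVar, [], .ff⟩}


/-! ### Auxiliary development for Statement 19 -/

section Stmt19Aux

/-- Nullary Boolean function variable. -/
def bool0 (v : FV) : Prop := v.1 = Srt.bool ∧ v.2.1 = 0

/-- Shape `p()`. -/
abbrev GS2 (v : FV) : Term Empty := .fapp v []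

/-- Shape `if a then b else c` on nullary variables. -/
abbrev GS3 (a b c : FV) : Term Empty :=
  .cond Srt.bool (.fapp a []) (.fapp b []) (.fapp c [])

/-- The shapes of right-hand sides occurring in graph programs. -/
def GShape (t : Term Empty) : Prop :=
  t = .ff ∨ (∃ v, bool0 v ∧ t = GS2 v) ∨
    (∃ a b c, bool0 a ∧ bool0 b ∧ bool0 c ∧ t = GS3 a b c)

theorem bool0_rVar : bool0 rVar := ⟨rfl, rfl⟩
theorem bool0_pVar {n : ℕ} (i : Fin n) : bool0 (pVar n i) := ⟨rfl, rfl⟩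
theorem bool0_pijVar {n : ℕ} (i j : Fin n) : bool0 (pijVar n i j) := ⟨rfl, rfl⟩

theorem bool0_of_sap {ρ : FV → FV} (hρ : SortArityPres ρ) {v : FV} (hv : bool0 v) :
    bool0 (ρ v) := ⟨(hρ v).1.trans hv.1, (hρ v).2.trans hv.2⟩

theorem sap_comp {ρ ρ' : FV → FV} (h : SortArityPres ρ) (h' : SortArityPres ρ') :
    SortArityPres (fun v => ρ (ρ' v)) := fun v =>
  ⟨((h (ρ' v)).1).trans (h' v).1, ((h (ρ' v)).2).trans (h' v).2⟩

theorem sap_id : SortArityPres (fun v : FV => v) := fun _ => ⟨rfl, rfl⟩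

theorem sap_symm {ρ : FV → FV} (hb : Function.Bijective ρ) (h : SortArityPres ρ) :
    SortArityPres (fun v => (Equiv.ofBijective ρ hb).symm v) := by
  intro v
  have h1 : ρ ((Equiv.ofBijective ρ hb).symm v) = v :=
    (Equiv.ofBijective ρ hb).apply_symm_apply v
  constructor
  · have := (h ((Equiv.ofBijective ρ hb).symm v)).1
    rw [h1] at this; exact this.symm
  · have := (h ((Equiv.ofBijective ρ hb).symm v)).2
    rw [h1] at this; exact this.symm

theorem pVar_ne_rVar {n : ℕ} (i : Fin n) : pVar n i ≠ rVar := by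
  simp [pVar, rVar]

theorem pijVar_ne_rVar {n : ℕ} (i j : Fin n) : pijVar n i j ≠ rVar := by
  simp [pijVar, rVar]

theorem pVar_inj {n : ℕ} {i j : Fin n} (h : pVar n i = pVar n j) : i = j := by
  simp [pVar] at h; exact Fin.ext h

theorem encode_lt {n : ℕ} (i j : Fin n) : (i : ℕ) * n + (j : ℕ) < n * n := by
  have h1 : (i : ℕ) * n + (j : ℕ) < ((i : ℕ) + 1) * n := by
    have := j.isLt; nlinarith
  have h2 : ((i : ℕ) + 1) * n ≤ n * n :=
    Nat.mul_le_mul_right n i.isLt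
  omega

theorem encode_inj {n : ℕ} {i j i' j' : Fin n}
    (h : (i : ℕ) * n + (j : ℕ) = (i' : ℕ) * n + (j' : ℕ)) : i = i' ∧ j = j' := by
  have hj := j.isLt; have hj' := j'.isLt
  have hii : (i : ℕ) = i' := by
    rcases Nat.lt_trichotomy (i : ℕ) i' with hlt | he | hlt
    · exfalso
      have : ((i : ℕ) + 1) * n ≤ (i' : ℕ) * n := Nat.mul_le_mul_right n hlt
      nlinarith
    · exact he
    · exfalso
      have : ((i' : ℕ) + 1) * n ≤ (i : ℕ) * n := Nat.mul_le_mul_right n hlt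
      nlinarith
  have hmm : (i : ℕ) * n = (i' : ℕ) * n := by rw [hii]
  refine ⟨Fin.ext hii, Fin.ext ?_⟩
  omega

theorem pijVar_inj {n : ℕ} {i j i' j' : Fin n} (h : pijVar n i j = pijVar n i' j') :
    i = i' ∧ j = j' := by
  simp [pijVar] at h
  exact encode_inj (by omega)

theorem pVar_ne_pijVar {n : ℕ} (i j k : Fin n) : pVar n i ≠ pijVar n j k := by
  simp [pVar, pijVar]
  have := i.isLt; omega

/-- `edgeTerm` in terms of shapes. -/
theorem edgeTerm_eq (n : ℕ) (E : Fin n → Fin n → Bool) (i j : Fin n) :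
    edgeTerm n E i j =
      if E i j then GS3 (pVar n i) (pVar n j) rVar else GS3 (pVar n i) rVar (pVar n j) := rfl

theorem gshape_ff : GShape (.ff : Term Empty) := Or.inl rfl

theorem gshape_GS2 {v : FV} (h : bool0 v) : GShape (GS2 v) := Or.inr (Or.inl ⟨v, h, rfl⟩)

theorem gshape_GS3 {a b c : FV} (ha : bool0 a) (hb : bool0 b) (hc : bool0 c) :
    GShape (GS3 a b c) := Or.inr (Or.inr ⟨a, b, c, ha, hb, hc, rfl⟩)

theorem gshape_edgeTerm {n : ℕ} (E : Fin n → Fin n → Bool) (i j : Fin n) :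
    GShape (edgeTerm n E i j) := by
  rw [edgeTerm_eq]
  split
  · exact gshape_GS3 (bool0_pVar i) (bool0_pVar j) bool0_rVar
  · exact gshape_GS3 (bool0_pVar i) bool0_rVar (bool0_pVar j)

/-! #### renaming computations on shapes -/

theorem renameF_ff (ρ : FV → FV) : renameF ρ (.ff : Term Empty) = .ff := by
  simp [renameF]

theorem renameF_GS2 (ρ : FV → FV) (v : FV) : renameF ρ (GS2 v) = GS2 (ρ v) := by
  simp [renameF, renameFL]

theorem renameF_GS3 (ρ : FV → FV) (a b c : FV) :
    renameF ρ (GS3 a b c) = GS3 (ρ a) (ρ b) (ρ c) := by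
  simp [renameF, renameFL]

theorem renameV_ff (σ : ℕ → ℕ) : renameV σ (.ff : Term Empty) = .ff := by
  simp [renameV]

theorem renameV_GS2 (σ : ℕ → ℕ) (v : FV) : renameV σ (GS2 v) = GS2 v := by
  simp [renameV, renameVL]

theorem renameV_GS3 (σ : ℕ → ℕ) (a b c : FV) : renameV σ (GS3 a b c) = GS3 a b c := by
  simp [renameV, renameVL]

theorem renameV_gshape {t : Term Empty} (h : GShape t) (σ : ℕ → ℕ) : renameV σ t = t := by
  rcases h with rfl | ⟨v, _, rfl⟩ | ⟨a, b, c, _, _, _, rfl⟩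
  · exact renameV_ff σ
  · exact renameV_GS2 σ v
  · exact renameV_GS3 σ a b c

theorem renameF_renameF_gshape {t : Term Empty} (h : GShape t) (ρ ρ' : FV → FV) :
    renameF ρ (renameF ρ' t) = renameF (fun v => ρ (ρ' v)) t := by
  rcases h with rfl | ⟨v, _, rfl⟩ | ⟨a, b, c, _, _, _, rfl⟩ <;>
    simp [renameF_ff, renameF_GS2, renameF_GS3]

theorem gshape_renameF {t : Term Empty} {ρ : FV → FV} (hρ : SortArityPres ρ)
    (h : GShape t) : GShape (renameF ρ t) := by
  rcases h with rfl | ⟨v, hv, rfl⟩ | ⟨a, b, c, ha, hb, hc, rfl⟩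
  · rw [renameF_ff]; exact gshape_ff
  · rw [renameF_GS2]; exact gshape_GS2 (bool0_of_sap hρ hv)
  · rw [renameF_GS3]
    exact gshape_GS3 (bool0_of_sap hρ ha) (bool0_of_sap hρ hb) (bool0_of_sap hρ hc)

end Stmt19Aux


section Stmt19Sem

/-- The trivial structure on `ℕ` for the empty vocabulary. -/
def St0 : Struc Empty ℕ := fun e _ => e.elim

/-- A fixed assignment of individuals. -/
def iv0 : ℕ → ℕ := fun _ => 0

/-- The environment determined by a Boolean valuation of the nullary
Boolean function variables. -/
def envOf (γ : FV → Option Bool) : Env ℕ := fun p as =>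
  if p.1 = Srt.bool ∧ p.2.1 = 0 ∧ as = [] then (γ p).map Sum.inr else none

theorem goodEnvOf (γ : FV → Option Bool) : GoodEnv (envOf γ) := by
  intro p as v h
  unfold envOf at h
  split at h
  · rename_i hc
    obtain ⟨h1, h2, h3⟩ := hc
    refine ⟨by rw [h3, h2]; rfl, ?_, ?_⟩
    · intro hi; rw [h1] at hi; cases hi
    · intro _
      cases hγ : γ p with
      | none => rw [hγ] at h; cases h
      | some b => rw [hγ] at h; exact ⟨b, by cases h; rfl⟩
  · cases h

/-- Evaluation of a conditional shape, at the level of Boolean valuations. -/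
def obval (γ : FV → Option Bool) (a b c : FV) : Option (ℕ ⊕ Bool) :=
  match γ a with
  | some true => (γ b).map Sum.inr
  | some false => (γ c).map Sum.inr
  | none => none

theorem ev_ff (env : Env ℕ) : eval St0 iv0 env (.ff : Term Empty) = some (Sum.inr false) := by
  simp [eval]

theorem ev_GS2 {v : FV} (hv : bool0 v) (γ : FV → Option Bool) :
    eval St0 iv0 (envOf γ) (GS2 v) = (γ v).map Sum.inr := by
  show (match evalArgs St0 iv0 (envOf γ) [] with
    | none => none
    | some as => envOf γ v as) = (γ v).map Sum.inr
  rw [show evalArgs St0 iv0 (envOf γ) [] = some [] from by simp [evalArgs]]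
  simp [envOf, hv.1, hv.2]

theorem ev_GS3 {a b c : FV} (ha : bool0 a) (hb : bool0 b) (hc : bool0 c)
    (γ : FV → Option Bool) :
    eval St0 iv0 (envOf γ) (GS3 a b c) = obval γ a b c := by
  simp only [eval]
  rw [show evalArgs St0 iv0 (envOf γ) [] = some [] from by simp [evalArgs]]
  simp only [obval, envOf, ha.1, ha.2, hb.1, hb.2, hc.1, hc.2, and_self, and_true, true_and,
    if_true, eq_self_iff_true]
  cases hγ : γ a with
  | none => simp [hγ]
  | some t => cases t <;> simp [hγ]

theorem eval_envOf_renameF {ρ : FV → FV} (hρ : SortArityPres ρ) {t : Term Empty}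
    (ht : GShape t) (γ : FV → Option Bool) :
    eval St0 iv0 (envOf γ) (renameF ρ t) =
      eval St0 iv0 (envOf (fun v => γ (ρ v))) t := by
  rcases ht with rfl | ⟨v, hv, rfl⟩ | ⟨a, b, c, ha, hb, hc, rfl⟩
  · rw [renameF_ff, ev_ff, ev_ff]
  · rw [renameF_GS2, ev_GS2 (bool0_of_sap hρ hv), ev_GS2 hv]
  · rw [renameF_GS3, ev_GS3 (bool0_of_sap hρ ha) (bool0_of_sap hρ hb) (bool0_of_sap hρ hc),
      ev_GS3 ha hb hc]
    rfl

/-! #### Distinguishing lemmas -/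

theorem dist_ff_GS2 {v : FV}
    (h : ∀ γ : FV → Option Bool, (some (Sum.inr false) : Option (ℕ ⊕ Bool)) = (γ v).map Sum.inr) :
    False := by
  have := h (fun _ => none); simp at this

theorem dist_ff_obval {a b c : FV}
    (h : ∀ γ : FV → Option Bool, (some (Sum.inr false) : Option (ℕ ⊕ Bool)) = obval γ a b c) :
    False := by
  have := h (fun _ => none); simp [obval] at this

theorem dist_GS2_obval {v a b c : FV} (hbc : b ≠ c)
    (h : ∀ γ : FV → Option Bool, ((γ v).map Sum.inr : Option (ℕ ⊕ Bool)) = obval γ a b c) :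
    False := by
  by_cases hva : v = a
  · subst hva
    by_cases hbv : b = v
    · have hcv : c ≠ v := fun h' => hbc (hbv.trans h'.symm)
      have := h (fun x => if x = v then some false else none)
      simp [obval, hcv] at this
    · have := h (fun x => if x = v then some true else none)
      simp [obval, hbv] at this
  · have := h (fun x => if x = v then some true else none)
    have hav : a ≠ v := fun h' => hva h'.symm
    simp [obval, hav] at this

theorem dist_GS2_GS2 {v w : FV}
    (h : ∀ γ : FV → Option Bool, ((γ v).map Sum.inr : Option (ℕ ⊕ Bool)) = (γ w).map Sum.inr) :
    v = w := by
  by_contra hvw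
  have := h (fun x => if x = v then some true else none)
  have hwv : w ≠ v := fun h' => hvw h'.symm
  simp [hwv] at this

theorem condEq {a b c a' b' c' : FV} (hbc : b ≠ c) (hbc' : b' ≠ c')
    (h : ∀ γ : FV → Option Bool, obval γ a b c = obval γ a' b' c') :
    a = a' ∧ b = b' ∧ c = c' := by
  classical
  have haa : a = a' := by
    by_contra haa
    by_cases hba' : b = a'
    · -- b = a', so b ≠ a and c ≠ a'
      have hba : b ≠ a := by rw [hba']; exact fun h' => haa h'.symm
      have hca' : c ≠ a' := by rw [← hba']; exact fun h' => hbc h'.symm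
      by_cases hca : c = a
      · have := h (fun x => if x = a then some false else none)
        have ha'a : a' ≠ a := fun h' => haa h'.symm
        simp [obval, hca, hba, ha'a] at this
      · have := h (fun x => if x = a then some false else if x = c then some true else none)
        have ha'a : a' ≠ a := fun h' => haa h'.symm
        have ha'c : a' ≠ c := fun h' => hca' h'.symm
        simp [obval, hca, hba, ha'a, hca', ha'c] at this
    · have := h (fun x => if x = a ∨ x = b then some true else none)
      have ha' : ¬(a' = a ∨ a' = b) := by
        push_neg; exact ⟨fun h' => haa h'.symm, fun h' => hba' h'.symm⟩
      simp [obval, ha'] at this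
  subst haa
  have hbb : b = b' := by
    by_contra hbb
    by_cases hb : b = a
    · have := h (fun x => if x = a then some true else none)
      have hb' : b' ≠ a := by rw [← hb]; exact fun h' => hbb h'.symm
      simp [obval, hb, hb'] at this
    · by_cases hb' : b' = a
      · have := h (fun x => if x = a then some true else none)
        simp [obval, hb, hb'] at this
      · have := h (fun x => if x = a ∨ x = b then some true else none)
        have hbn : ¬(b' = a ∨ b' = b) := by
          push_neg; exact ⟨hb', fun h' => hbb h'.symm⟩
        simp [obval, hbn] at this
  subst hbb
  refine ⟨rfl, rfl, ?_⟩
  by_contra hcc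
  by_cases hc : c = a
  · have := h (fun x => if x = a then some false else none)
    have hc' : c' ≠ a := by rw [← hc]; exact fun h' => hcc h'.symm
    simp [obval, hc, hc'] at this
  · by_cases hc' : c' = a
    · have := h (fun x => if x = a then some false else none)
      simp [obval, hc, hc'] at this
    · have := h (fun x => if x = a then some false else if x = c then some true else none)
      have hcn : c' ≠ c := fun h' => hcc h'.symm
      simp [obval, hc, hc', hcn] at this

end Stmt19Sem


section Stmt19Prog

variable {n : ℕ}

/-- Characterization of the body of a graph program. -/
theorem mem_gp_body {E : Fin n → Fin n → Bool} {e : Eqn Empty} :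
    e ∈ (graphProg n E).body ↔
      (∃ i, e = ⟨pVar n i, [], GS2 (pVar n i)⟩) ∨
      (∃ i j, e = ⟨pijVar n i j, [], edgeTerm n E i j⟩) ∨
      e = ⟨rVar, [], .ff⟩ := by
  simp only [graphProg, Multiset.mem_add, Multiset.mem_map, Multiset.mem_singleton,
    Finset.mem_val, Finset.mem_univ, true_and]
  constructor
  · rintro ((⟨i, hi⟩ | ⟨⟨i, j⟩, hij⟩) | hr)
    · exact Or.inl ⟨i, hi.symm⟩
    · exact Or.inr (Or.inl ⟨i, j, hij.symm⟩)
    · exact Or.inr (Or.inr hr)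
  · rintro (⟨i, rfl⟩ | ⟨i, j, rfl⟩ | rfl)
    · exact Or.inl (Or.inl ⟨i, rfl⟩)
    · exact Or.inl (Or.inr ⟨⟨i, j⟩, rfl⟩)
    · exact Or.inr rfl

theorem gp_eqn_xs {E : Fin n → Fin n → Bool} {e : Eqn Empty}
    (he : e ∈ (graphProg n E).body) : e.xs = [] := by
  rcases mem_gp_body.1 he with ⟨i, rfl⟩ | ⟨i, j, rfl⟩ | rfl <;> rfl

theorem gp_eqn_gshape {E : Fin n → Fin n → Bool} {e : Eqn Empty}
    (he : e ∈ (graphProg n E).body) : GShape e.rhs := by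
  rcases mem_gp_body.1 he with ⟨i, rfl⟩ | ⟨i, j, rfl⟩ | rfl
  · exact gshape_GS2 (bool0_pVar i)
  · exact gshape_edgeTerm E i j
  · exact gshape_ff

theorem mem_gp_bodyPvars {E : Fin n → Fin n → Bool} {v : FV} :
    v ∈ bodyPvars (graphProg n E) ↔
      (∃ i, v = pVar n i) ∨ (∃ i j, v = pijVar n i j) ∨ v = rVar := by
  simp only [bodyPvars, Multiset.mem_map]
  constructor
  · rintro ⟨e, he, rfl⟩
    rcases mem_gp_body.1 he with ⟨i, rfl⟩ | ⟨i, j, rfl⟩ | rfl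
    · exact Or.inl ⟨i, rfl⟩
    · exact Or.inr (Or.inl ⟨i, j, rfl⟩)
    · exact Or.inr (Or.inr rfl)
  · rintro (⟨i, rfl⟩ | ⟨i, j, rfl⟩ | rfl)
    · exact ⟨_, mem_gp_body.2 (Or.inl ⟨i, rfl⟩), rfl⟩
    · exact ⟨_, mem_gp_body.2 (Or.inr (Or.inl ⟨i, j, rfl⟩)), rfl⟩
    · exact ⟨_, mem_gp_body.2 (Or.inr (Or.inr rfl)), rfl⟩

theorem imm_fapp0 {v : FV} (hv : v.2.1 = 0) :
    isImmediate (Term.fapp v [] : Term Empty) = true := by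
  simp [isImmediate, hv]

theorem irr_gshape {t : Term Empty} (h : GShape t) : isIrreducible t = true := by
  rcases h with rfl | ⟨v, hv, rfl⟩ | ⟨a, b, c, ha, hb, hc, rfl⟩
  · rfl
  · simp [isIrreducible, hv.2]
  · simp [isIrreducible, imm_fapp0 ha.2, imm_fapp0 hb.2, imm_fapp0 hc.2]

theorem irr_gp (E : Fin n → Fin n → Bool) : IrrProg (graphProg n E) :=
  ⟨rfl, fun e he => irr_gshape (gp_eqn_gshape he)⟩

/-- Inversion for reduction steps. -/
theorem step_inv {l : Lbl} {A B : ExtProg Empty} (h : Step l A B) :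
    isApp A.head = true ∨
    ∃ e ∈ A.body, ∃ j : ℕ, ∃ G' : Term Empty,
      isApp e.rhs = true ∧ (argsOf e.rhs)[j]? = some G' ∧ isImmediate G' = false := by
  cases h with
  | body p j q EE FF s e G hbody hp happ hG himm hq har hF =>
      refine Or.inr ⟨e, ?_, j, G, happ, hG, himm⟩
      rw [hbody]
      exact Multiset.mem_add.mpr (Or.inr (Multiset.mem_singleton_self e))
  | head p j q EE FF G hp hq hpq happ hG himm har hF =>
      exact Or.inl happ

/-- No reduction step applies to a graph program. -/
theorem no_step_gp {E : Fin n → Fin n → Bool} {l : Lbl} {G : ExtProg Empty} :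
    ¬ Step l (graphProg n E) G := by
  intro h
  rcases step_inv h with happ | ⟨e, he, j, G', happ, hG, himm⟩
  · simp [graphProg, isApp] at happ
  · rcases mem_gp_body.1 he with ⟨i, rfl⟩ | ⟨i, j', rfl⟩ | rfl
    · simp [argsOf] at hG
    · simp only [edgeTerm_eq] at hG himm happ
      split at hG <;>
      · simp only [argsOf] at hG
        match j, hG with
        | 0, hG => rw [(Option.some_inj.1 hG).symm] at himm
                   rw [imm_fapp0 (bool0_pVar _).2] at himm; cases himm
        | 1, hG => first
            | (rw [(Option.some_inj.1 hG).symm] at himm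
               rw [imm_fapp0 (bool0_pVar _).2] at himm; cases himm)
            | (rw [(Option.some_inj.1 hG).symm] at himm
               rw [imm_fapp0 bool0_rVar.2] at himm; cases himm)
        | 2, hG => first
            | (rw [(Option.some_inj.1 hG).symm] at himm
               rw [imm_fapp0 (bool0_pVar _).2] at himm; cases himm)
            | (rw [(Option.some_inj.1 hG).symm] at himm
               rw [imm_fapp0 bool0_rVar.2] at himm; cases himm)
        | (k+3), hG => simp at hG
    · simp [isApp] at happ

theorem reduces_gp_congruent {E : Fin n → Fin n → Bool} {G : ExtProg Empty}
    (h : Reduces (graphProg n E) G) : Congruent (graphProg n E) G := by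
  obtain ⟨H, hrt, hc⟩ := h
  rcases Relation.ReflTransGen.cases_head hrt with rfl | ⟨c, ⟨l, hstep⟩, _⟩
  · exact hc
  · exact absurd hstep no_step_gp

/-- Composition of multiset relations. -/
theorem rel_comp {α β γ : Type*} {r : α → β → Prop} {r' : β → γ → Prop}
    {s : Multiset α} {t : Multiset β} {u : Multiset γ}
    (h : Multiset.Rel r s t) (h' : Multiset.Rel r' t u) :
    Multiset.Rel (fun a c => ∃ b, r a b ∧ r' b c) s u := by
  induction h generalizing u with
  | zero =>
      rw [Multiset.rel_zero_left] at h' ⊢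
      exact h'
  | @cons a b s' t' hab _ ih =>
      rcases Multiset.rel_cons_left.1 h' with ⟨c, u', hbc, hrest, rfl⟩
      exact Multiset.Rel.cons ⟨b, hab, hbc⟩ (ih hrest)

end Stmt19Prog


section Stmt19Perm

variable {n : ℕ}

theorem dec_lt1 {k : ℕ} (h : k < n * n) : k / n < n := by
  have hn : 0 < n := by
    rcases Nat.eq_zero_or_pos n with h0 | h0
    · subst h0; omega
    · exact h0
  exact Nat.div_lt_of_lt_mul (by omega)

theorem dec_lt2 {k : ℕ} (h : k < n * n) : k % n < n := by
  have hn : 0 < n := by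
    rcases Nat.eq_zero_or_pos n with h0 | h0
    · subst h0; omega
    · exact h0
  exact Nat.mod_lt _ hn

/-- The action of a permutation of nodes on indices of propositional variables. -/
def natMap (σ : Equiv.Perm (Fin n)) (m : ℕ) : ℕ :=
  if m = 0 then 0
  else if h : m - 1 < n then 1 + (σ ⟨m - 1, h⟩ : ℕ)
  else if h2 : m - 1 - n < n * n then
    1 + n + ((σ ⟨(m - 1 - n) / n, dec_lt1 h2⟩ : ℕ) * n + (σ ⟨(m - 1 - n) % n, dec_lt2 h2⟩ : ℕ))
  else m

theorem natMap_zero (σ : Equiv.Perm (Fin n)) : natMap σ 0 = 0 := rfl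

theorem natMap_p (σ : Equiv.Perm (Fin n)) (i : Fin n) :
    natMap σ (1 + (i : ℕ)) = 1 + (σ i : ℕ) := by
  have h1 : 1 + (i : ℕ) ≠ 0 := by omega
  have h2 : 1 + (i : ℕ) - 1 < n := by have := i.isLt; omega
  unfold natMap
  rw [if_neg h1, dif_pos h2]
  have e1 : (⟨1 + (i : ℕ) - 1, h2⟩ : Fin n) = i := Fin.ext (by simp)
  rw [e1]

theorem enc_div (i j : Fin n) : ((i : ℕ) * n + (j : ℕ)) / n = (i : ℕ) := by
  have hn : 0 < n := i.pos
  rw [show (i : ℕ) * n + (j : ℕ) = (j : ℕ) + n * (i : ℕ) by ring]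
  rw [Nat.add_mul_div_left _ _ hn, Nat.div_eq_of_lt j.isLt]
  omega

theorem enc_mod (i j : Fin n) : ((i : ℕ) * n + (j : ℕ)) % n = (j : ℕ) := by
  rw [show (i : ℕ) * n + (j : ℕ) = (j : ℕ) + n * (i : ℕ) by ring]
  rw [Nat.add_mul_mod_self_left, Nat.mod_eq_of_lt j.isLt]

theorem natMap_pij (σ : Equiv.Perm (Fin n)) (i j : Fin n) :
    natMap σ (1 + n + ((i : ℕ) * n + (j : ℕ))) =
      1 + n + ((σ i : ℕ) * n + (σ j : ℕ)) := by
  have h1 : 1 + n + ((i : ℕ) * n + (j : ℕ)) ≠ 0 := by omega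
  have h2 : ¬(1 + n + ((i : ℕ) * n + (j : ℕ)) - 1 < n) := by omega
  have h3 : 1 + n + ((i : ℕ) * n + (j : ℕ)) - 1 - n < n * n := by
    have := encode_lt i j; omega
  have h4 : 1 + n + ((i : ℕ) * n + (j : ℕ)) - 1 - n = (i : ℕ) * n + (j : ℕ) := by omega
  unfold natMap
  rw [if_neg h1, dif_neg h2, dif_pos h3]
  have e1 : (⟨(1 + n + ((i : ℕ) * n + (j : ℕ)) - 1 - n) / n, dec_lt1 h3⟩ : Fin n) = i :=
    Fin.ext (by show _ / n = (i : ℕ); rw [h4]; exact enc_div i j)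
  have e2 : (⟨(1 + n + ((i : ℕ) * n + (j : ℕ)) - 1 - n) % n, dec_lt2 h3⟩ : Fin n) = j :=
    Fin.ext (by show _ % n = (j : ℕ); rw [h4]; exact enc_mod i j)
  rw [e1, e2]

theorem natMap_out (σ : Equiv.Perm (Fin n)) {m : ℕ} (h1 : m ≠ 0) (h2 : ¬(m - 1 < n))
    (h3 : ¬(m - 1 - n < n * n)) : natMap σ m = m := by
  unfold natMap
  rw [if_neg h1, dif_neg h2, dif_neg h3]

theorem natMap_leftInv (σ : Equiv.Perm (Fin n)) (m : ℕ) :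
    natMap σ.symm (natMap σ m) = m := by
  by_cases h1 : m = 0
  · subst h1; rfl
  · by_cases h2 : m - 1 < n
    · have hm : m = 1 + ((⟨m - 1, h2⟩ : Fin n) : ℕ) := by simp; omega
      rw [hm, natMap_p, natMap_p, Equiv.symm_apply_apply]
    · by_cases h3 : m - 1 - n < n * n
      · set i : Fin n := ⟨(m - 1 - n) / n, dec_lt1 h3⟩ with hi
        set j : Fin n := ⟨(m - 1 - n) % n, dec_lt2 h3⟩ with hj
        have hk : (i : ℕ) * n + (j : ℕ) = m - 1 - n := by
          have := Nat.div_add_mod' (m - 1 - n) n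
          simp only [hi, hj]
          omega
        have hm : m = 1 + n + ((i : ℕ) * n + (j : ℕ)) := by omega
        rw [hm, natMap_pij, natMap_pij, Equiv.symm_apply_apply, Equiv.symm_apply_apply]
      · rw [natMap_out σ h1 h2 h3, natMap_out σ.symm h1 h2 h3]

/-- The permutation of function variables induced by a permutation of nodes. -/
def permFV (σ : Equiv.Perm (Fin n)) : FV → FV := fun v =>
  if v.1 = Srt.bool ∧ v.2.1 = 0 then (Srt.bool, 0, natMap σ v.2.2) else v

theorem permFV_leftInv (σ : Equiv.Perm (Fin n)) (v : FV) :
    permFV σ.symm (permFV σ v) = v := by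
  obtain ⟨s, a, m⟩ := v
  by_cases h : s = Srt.bool ∧ a = 0
  · obtain ⟨rfl, rfl⟩ := h
    simp only [permFV, and_self, if_true, if_pos]
    rw [natMap_leftInv]
  · simp only [permFV, if_neg h]

theorem permFV_bijective (σ : Equiv.Perm (Fin n)) : Function.Bijective (permFV σ) := by
  have h1 : Function.LeftInverse (permFV σ.symm) (permFV σ) := permFV_leftInv σ
  have h2 : Function.RightInverse (permFV σ.symm) (permFV σ) := by
    intro v
    have := permFV_leftInv σ.symm v
    rwa [Equiv.symm_symm] at this
  exact Function.bijective_iff_has_inverse.2 ⟨permFV σ.symm, h1, h2⟩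

theorem permFV_sap (σ : Equiv.Perm (Fin n)) : SortArityPres (permFV σ) := by
  intro v
  by_cases h : v.1 = Srt.bool ∧ v.2.1 = 0
  · simp [permFV, h]
  · simp [permFV, h]

theorem permFV_rVar (σ : Equiv.Perm (Fin n)) : permFV σ rVar = rVar := rfl

theorem permFV_pVar (σ : Equiv.Perm (Fin n)) (i : Fin n) :
    permFV σ (pVar n i) = pVar n (σ i) := by
  show (if (Srt.bool = Srt.bool ∧ (0:ℕ) = 0) then (Srt.bool, 0, natMap σ (1 + (i:ℕ))) else pVar n i) = pVar n (σ i)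
  rw [if_pos ⟨rfl, rfl⟩, natMap_p]
  rfl

theorem permFV_pijVar (σ : Equiv.Perm (Fin n)) (i j : Fin n) :
    permFV σ (pijVar n i j) = pijVar n (σ i) (σ j) := by
  show (if (Srt.bool = Srt.bool ∧ (0:ℕ) = 0) then (Srt.bool, 0, natMap σ (1 + n + ((i:ℕ) * n + (j:ℕ)))) else pijVar n i j) = pijVar n (σ i) (σ j)
  rw [if_pos ⟨rfl, rfl⟩, natMap_pij]
  rfl

theorem permFV_fix (σ : Equiv.Perm (Fin n)) {E : Fin n → Fin n → Bool} {v : FV}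
    (hv : v ∉ bodyPvars (graphProg n E)) : permFV σ v = v := by
  obtain ⟨s, a, m⟩ := v
  by_cases h : s = Srt.bool ∧ a = 0
  · obtain ⟨rfl, rfl⟩ := h
    by_cases hm1 : m = 0
    · subst hm1
      exfalso; exact hv (mem_gp_bodyPvars.2 (Or.inr (Or.inr rfl)))
    · by_cases hm2 : m - 1 < n
      · exfalso; apply hv; rw [mem_gp_bodyPvars]
        refine Or.inl ⟨⟨m - 1, hm2⟩, ?_⟩
        simp only [pVar]
        refine Prod.ext rfl (Prod.ext rfl ?_)
        simp only
        omega
      · by_cases hm3 : m - 1 - n < n * n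
        · exfalso; apply hv; rw [mem_gp_bodyPvars]
          refine Or.inr (Or.inl ⟨⟨(m - 1 - n) / n, dec_lt1 hm3⟩,
            ⟨(m - 1 - n) % n, dec_lt2 hm3⟩, ?_⟩)
          simp only [pijVar]
          refine Prod.ext rfl (Prod.ext rfl ?_)
          simp only
          have := Nat.div_add_mod' (m - 1 - n) n
          omega
        · show (if (Srt.bool = Srt.bool ∧ (0:ℕ) = 0) then (Srt.bool, 0, natMap σ m) else (Srt.bool, 0, m)) = (Srt.bool, (0:ℕ), m)
          rw [if_pos ⟨rfl, rfl⟩, natMap_out σ hm1 hm2 hm3]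
  · simp [permFV, h]

end Stmt19Perm


section Stmt19Forward

variable {n : ℕ}

theorem renameF_id_gshape {t : Term Empty} (h : GShape t) :
    renameF (fun v => v) t = t := by
  rcases h with rfl | ⟨v, _, rfl⟩ | ⟨a, b, c, _, _, _, rfl⟩
  · exact renameF_ff _
  · exact renameF_GS2 _ v
  · exact renameF_GS3 _ a b c

/-- Every graph program is congruent to itself. -/
theorem congruent_refl_gp {E : Fin n → Fin n → Bool} :
    Congruent (graphProg n E) (graphProg n E) := by
  refine ⟨fun v => v, Function.bijective_id, sap_id, fun _ _ => rfl, rfl, ?_, ?_⟩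
  · show (graphProg n E).head = renameF (fun v => v) (graphProg n E).head
    simp [graphProg, renameF]
  · apply Multiset.rel_refl_of_refl_on
    intro e he
    refine ⟨rfl, id, fun a _ b _ h => h, (List.map_id _).symm, ?_⟩
    rw [renameF_id_gshape (gp_eqn_gshape he), renameV_gshape (gp_eqn_gshape he)]

/-- Isomorphic graphs have congruent programs. -/
theorem iso_to_congruent {E F : Fin n → Fin n → Bool} (σ : Equiv.Perm (Fin n))
    (hσ : ∀ i j, E i j = F (σ i) (σ j)) :
    Congruent (graphProg n E) (graphProg n F) := by
  refine ⟨permFV σ, permFV_bijective σ, permFV_sap σ, fun p hp => permFV_fix σ hp, rfl, ?_, ?_⟩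
  · show (graphProg n F).head = renameF (permFV σ) (graphProg n E).head
    simp [graphProg, renameF]
  · show Multiset.Rel (EqnCong (permFV σ)) (graphProg n E).body (graphProg n F).body
    unfold graphProg
    simp only
    refine Multiset.Rel.add (Multiset.Rel.add ?_ ?_) ?_
    · conv_rhs => rw [← Multiset.map_univ_val_equiv σ, Multiset.map_map]
      rw [Multiset.rel_map]
      apply Multiset.rel_refl_of_refl_on
      intro i _
      refine ⟨(permFV_pVar σ i).symm, id, fun a ha => absurd ha List.not_mem_nil,
        rfl, ?_⟩
      show GS2 (pVar n (σ i)) = renameV id (renameF (permFV σ) (GS2 (pVar n i)))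
      rw [renameF_GS2, renameV_GS2, permFV_pVar]
    · conv_rhs => rw [← Multiset.map_univ_val_equiv (Equiv.prodCongr σ σ), Multiset.map_map]
      rw [Multiset.rel_map]
      apply Multiset.rel_refl_of_refl_on
      rintro ⟨i, j⟩ _
      refine ⟨(permFV_pijVar σ i j).symm, id, fun a ha => absurd ha List.not_mem_nil,
        rfl, ?_⟩
      show edgeTerm n F (σ i) (σ j) = renameV id (renameF (permFV σ) (edgeTerm n E i j))
      have hFE : F (σ i) (σ j) = E i j := (hσ i j).symm
      rw [edgeTerm_eq n E, edgeTerm_eq n F, hFE]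
      by_cases hE : E i j <;>
        simp [hE, renameF_GS3, renameV_GS3, permFV_pVar, permFV_rVar]
    · refine Multiset.Rel.cons ?_ Multiset.Rel.zero
      refine ⟨rfl, id, fun a ha => absurd ha List.not_mem_nil, rfl, ?_⟩
      show Term.ff = renameV id (renameF (permFV σ) Term.ff)
      rw [renameF_ff, renameV_ff]

/-- A congruence between graph programs yields equality of recursors in any structure. -/
theorem congruent_gp_receq {A : Type} (St : Struc Empty A) {E F : Fin n → Fin n → Bool}
    (hc : Congruent (graphProg n E) (graphProg n F)) :
    RecEq St (graphProg n E) (graphProg n F) := by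
  obtain ⟨ρ, hbij, hsap, hfix, hfv, hhead, hrel⟩ := hc
  set ε := Equiv.ofBijective ρ hbij with hε
  refine ⟨fun v => ε.symm v, ε.symm.bijective, sap_symm hbij hsap, ?_, ?_⟩
  · intro iv env _
    have h1 : renameF (fun v => ε.symm v) (graphProg n F).head = Term.tt := by
      show renameF (fun v => ε.symm v) Term.tt = Term.tt
      simp [renameF]
    rw [h1]
    rfl
  · refine Multiset.Rel.mono hrel ?_
    intro e he f hf hec
    obtain ⟨hp, σ', hinj, hxs, hrhs⟩ := hec
    have hex : e.xs = [] := gp_eqn_xs he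
    have hfx : f.xs = [] := by rw [hxs, hex]; rfl
    have hsh := gp_eqn_gshape he
    refine ⟨?_, ?_, ?_⟩
    · rw [hp]
      exact (ε.symm_apply_apply e.p).symm
    · rw [hex, hfx]
    · intro iv env _
      have hfr : f.rhs = renameF ρ e.rhs := by
        rw [hrhs, renameV_gshape (gshape_renameF hsap hsh)]
      rw [hfr, renameF_renameF_gshape hsh]
      have hid : (fun v => ε.symm (ρ v)) = fun v => v :=
        funext fun v => ε.symm_apply_apply v
      rw [hid, renameF_id_gshape hsh, renameV_gshape hsh]

/-- Congruent graph programs are globally intensionally equivalent. -/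
theorem congruent_to_gie {E F : Fin n → Fin n → Bool}
    (hc : Congruent (graphProg n E) (graphProg n F)) :
    GlobalIntEq (graphProg n E) (graphProg n F) := by
  intro A St _
  exact ⟨graphProg n E, graphProg n F,
    ⟨graphProg n E, Relation.ReflTransGen.refl, congruent_refl_gp⟩, irr_gp E,
    ⟨graphProg n F, Relation.ReflTransGen.refl, congruent_refl_gp⟩, irr_gp F,
    congruent_gp_receq St hc⟩

end Stmt19Forward


section Stmt19Hard

variable {n : ℕ}

/-- Global intensional equivalence yields isomorphism of the graphs. -/
theorem gie_to_iso {E F : Fin n → Fin n → Bool}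
    (h : GlobalIntEq (graphProg n E) (graphProg n F)) :
    ∃ σ : Equiv.Perm (Fin n), ∀ i j, E i j = F (σ i) (σ j) := by
  obtain ⟨E', F', hRE, _, hRF, _, hrec⟩ := h ℕ St0 inferInstance
  obtain ⟨ρ₁, hb₁, hs₁, -, -, -, hrel₁⟩ := reduces_gp_congruent hRE
  obtain ⟨ρ₂, hb₂, hs₂, -, -, -, hrel₂⟩ := reduces_gp_congruent hRF
  obtain ⟨ρ, hb, hs, -, hrelS⟩ := hrec
  set ε₁ := Equiv.ofBijective ρ₁ hb₁ with hε₁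
  set μ : FV → FV := fun v => ε₁.symm (ρ (ρ₂ v)) with hμ
  have hμsap : SortArityPres μ := sap_comp (sap_symm hb₁ hs₁) (sap_comp hs hs₂)
  have hμbij : Function.Bijective μ :=
    (ε₁.symm.bijective).comp (hb.comp hb₂)
  have hflip : Multiset.Rel (flip (EqnCong ρ₂)) F'.body (graphProg n F).body :=
    Multiset.rel_flip.2 hrel₂
  have hcomp := rel_comp (rel_comp hrel₁ hrelS) hflip
  have hR : Multiset.Rel (fun e f => e.p = μ f.p ∧ ∀ γ : FV → Option Bool,
      eval St0 iv0 (envOf γ) e.rhs = eval St0 iv0 (envOf γ) (renameF μ f.rhs))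
      (graphProg n E).body (graphProg n F).body := by
    refine Multiset.Rel.mono hcomp ?_
    intro e he f hf hex
    obtain ⟨f', ⟨e', hC1, hS⟩, hC2⟩ := hex
    obtain ⟨hp1, σ₁, -, hxs₁, hr₁⟩ := hC1
    obtain ⟨hpS, hlen, hsem⟩ := hS
    obtain ⟨hp2, σ₂, -, hxs₂, hr₂⟩ := hC2
    have hshe := gp_eqn_gshape he
    have hshf := gp_eqn_gshape hf
    have he'r : e'.rhs = renameF ρ₁ e.rhs := by
      rw [hr₁, renameV_gshape (gshape_renameF hs₁ hshe)]
    have hf'r : f'.rhs = renameF ρ₂ f.rhs := by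
      rw [hr₂, renameV_gshape (gshape_renameF hs₂ hshf)]
    constructor
    · -- e.p = μ f.p
      have : e'.p = ρ (ρ₂ f.p) := by rw [hpS, hp2]
      rw [hp1] at this
      have h2 : ε₁.symm (ρ₁ e.p) = ε₁.symm (ρ (ρ₂ f.p)) := by rw [this]
      rw [show ρ₁ e.p = ε₁ e.p from rfl, ε₁.symm_apply_apply] at h2
      exact h2
    · intro γ
      have hgood : GoodEnv (envOf (fun v => γ (ε₁.symm v))) := goodEnvOf _
      have h0 := hsem iv0 (envOf (fun v => γ (ε₁.symm v))) hgood
      rw [he'r, hf'r] at h0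
      rw [renameF_renameF_gshape hshf] at h0
      rw [renameV_gshape (gshape_renameF (sap_comp hs hs₂) hshf)] at h0
      rw [eval_envOf_renameF hs₁ hshe] at h0
      rw [eval_envOf_renameF (sap_comp hs hs₂) hshf] at h0
      have hγ : (fun v => (fun w => γ (ε₁.symm w)) (ρ₁ v)) = γ := by
        funext v
        simp only
        rw [show ρ₁ v = ε₁ v from rfl, ε₁.symm_apply_apply]
      rw [hγ] at h0
      rw [eval_envOf_renameF hμsap hshf]
      exact h0
  -- Step A : μ rVar = rVar
  have hμr : μ rVar = rVar := by
    have hmem : (⟨rVar, [], Term.ff⟩ : Eqn Empty) ∈ (graphProg n E).body :=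
      mem_gp_body.2 (Or.inr (Or.inr rfl))
    obtain ⟨f, hf, hpf, hsem⟩ := Multiset.exists_mem_of_rel_of_mem hR hmem
    rcases mem_gp_body.1 hf with ⟨k, rfl⟩ | ⟨k, l, rfl⟩ | rfl
    · exfalso
      refine dist_ff_GS2 (v := μ (pVar n k)) fun γ => ?_
      have h1 := hsem γ
      rwa [ev_ff, renameF_GS2, ev_GS2 (bool0_of_sap hμsap (bool0_pVar k))] at h1
    · exfalso
      by_cases hFkl : F k l
      · refine dist_ff_obval (a := μ (pVar n k)) (b := μ (pVar n l)) (c := μ rVar)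
          fun γ => ?_
        have h1 := hsem γ
        rwa [ev_ff, edgeTerm_eq, if_pos hFkl, renameF_GS3,
          ev_GS3 (bool0_of_sap hμsap (bool0_pVar k)) (bool0_of_sap hμsap (bool0_pVar l))
            (bool0_of_sap hμsap bool0_rVar)] at h1
      · refine dist_ff_obval (a := μ (pVar n k)) (b := μ rVar) (c := μ (pVar n l))
          fun γ => ?_
        have h1 := hsem γ
        rwa [ev_ff, edgeTerm_eq, if_neg hFkl, renameF_GS3,
          ev_GS3 (bool0_of_sap hμsap (bool0_pVar k)) (bool0_of_sap hμsap bool0_rVar)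
            (bool0_of_sap hμsap (bool0_pVar l))] at h1
    · exact hpf.symm
  -- Step B : μ maps pVars to pVars
  have hτ0 : ∀ k : Fin n, ∃ i : Fin n, μ (pVar n k) = pVar n i := by
    intro k
    have hmem : (⟨pVar n k, [], GS2 (pVar n k)⟩ : Eqn Empty) ∈ (graphProg n F).body :=
      mem_gp_body.2 (Or.inl ⟨k, rfl⟩)
    obtain ⟨e, he, hpe, hsem⟩ :=
      Multiset.exists_mem_of_rel_of_mem (Multiset.rel_flip.2 hR) hmem
    rcases mem_gp_body.1 he with ⟨i, rfl⟩ | ⟨i, j, rfl⟩ | rfl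
    · exact ⟨i, hpe.symm⟩
    · exfalso
      by_cases hEij : E i j
      · refine dist_GS2_obval (v := μ (pVar n k)) (a := pVar n i) (b := pVar n j)
          (c := rVar) (pVar_ne_rVar j) fun γ => ?_
        have h1 := hsem γ
        rw [edgeTerm_eq, if_pos hEij,
          ev_GS3 (bool0_pVar i) (bool0_pVar j) bool0_rVar, renameF_GS2,
          ev_GS2 (bool0_of_sap hμsap (bool0_pVar k))] at h1
        exact h1.symm
      · refine dist_GS2_obval (v := μ (pVar n k)) (a := pVar n i) (b := rVar)
          (c := pVar n j) (Ne.symm (pVar_ne_rVar j)) fun γ => ?_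
        have h1 := hsem γ
        rw [edgeTerm_eq, if_neg hEij,
          ev_GS3 (bool0_pVar i) bool0_rVar (bool0_pVar j), renameF_GS2,
          ev_GS2 (bool0_of_sap hμsap (bool0_pVar k))] at h1
        exact h1.symm
    · exfalso
      refine dist_ff_GS2 (v := μ (pVar n k)) fun γ => ?_
      have h1 := hsem γ
      rwa [ev_ff, renameF_GS2, ev_GS2 (bool0_of_sap hμsap (bool0_pVar k))] at h1
  choose τ hτ using hτ0
  have hτinj : Function.Injective τ := by
    intro k k' hkk
    have h1 : μ (pVar n k) = μ (pVar n k') := by rw [hτ k, hτ k', hkk]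
    exact pVar_inj (hμbij.injective h1)
  -- Step C : edge relations
  have hmain : ∀ k l : Fin n, E (τ k) (τ l) = F k l := by
    intro k l
    have hmem : (⟨pijVar n k l, [], edgeTerm n F k l⟩ : Eqn Empty) ∈ (graphProg n F).body :=
      mem_gp_body.2 (Or.inr (Or.inl ⟨k, l, rfl⟩))
    obtain ⟨e, he, hpe, hsem⟩ :=
      Multiset.exists_mem_of_rel_of_mem (Multiset.rel_flip.2 hR) hmem
    have hRt : renameF μ (edgeTerm n F k l) =
        if F k l then GS3 (pVar n (τ k)) (pVar n (τ l)) rVar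
        else GS3 (pVar n (τ k)) rVar (pVar n (τ l)) := by
      by_cases hFkl : F k l
      · rw [edgeTerm_eq, if_pos hFkl, if_pos hFkl, renameF_GS3, hτ k, hτ l, hμr]
      · rw [edgeTerm_eq, if_neg hFkl, if_neg hFkl, renameF_GS3, hτ k, hτ l, hμr]
    have hevR : ∀ γ : FV → Option Bool,
        eval St0 iv0 (envOf γ) (renameF μ (edgeTerm n F k l)) =
          if F k l then obval γ (pVar n (τ k)) (pVar n (τ l)) rVar
          else obval γ (pVar n (τ k)) rVar (pVar n (τ l)) := by
      intro γ
      rw [hRt]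
      by_cases hFkl : F k l
      · rw [if_pos hFkl, if_pos hFkl,
          ev_GS3 (bool0_pVar _) (bool0_pVar _) bool0_rVar]
      · rw [if_neg hFkl, if_neg hFkl,
          ev_GS3 (bool0_pVar _) bool0_rVar (bool0_pVar _)]
    rcases mem_gp_body.1 he with ⟨i, rfl⟩ | ⟨i, j, rfl⟩ | rfl
    · exfalso
      by_cases hFkl : F k l
      · refine dist_GS2_obval (v := pVar n i) (a := pVar n (τ k)) (b := pVar n (τ l))
          (c := rVar) (pVar_ne_rVar (τ l)) fun γ => ?_
        have h1 := hsem γ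
        rwa [ev_GS2 (bool0_pVar i), hevR γ, if_pos hFkl] at h1
      · refine dist_GS2_obval (v := pVar n i) (a := pVar n (τ k)) (b := rVar)
          (c := pVar n (τ l)) (Ne.symm (pVar_ne_rVar (τ l))) fun γ => ?_
        have h1 := hsem γ
        rwa [ev_GS2 (bool0_pVar i), hevR γ, if_neg hFkl] at h1
    · -- main case
      have hevL : ∀ γ : FV → Option Bool,
          eval St0 iv0 (envOf γ) (edgeTerm n E i j) =
            if E i j then obval γ (pVar n i) (pVar n j) rVar
            else obval γ (pVar n i) rVar (pVar n j) := by
        intro γ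
        by_cases hEij : E i j
        · rw [edgeTerm_eq, if_pos hEij, if_pos hEij,
            ev_GS3 (bool0_pVar _) (bool0_pVar _) bool0_rVar]
        · rw [edgeTerm_eq, if_neg hEij, if_neg hEij,
            ev_GS3 (bool0_pVar _) bool0_rVar (bool0_pVar _)]
      have hsem' : ∀ γ : FV → Option Bool,
          (if E i j then obval γ (pVar n i) (pVar n j) rVar
            else obval γ (pVar n i) rVar (pVar n j)) =
          (if F k l then obval γ (pVar n (τ k)) (pVar n (τ l)) rVar
            else obval γ (pVar n (τ k)) rVar (pVar n (τ l))) := by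
        intro γ
        have h1 := hsem γ
        rwa [hevL γ, hevR γ] at h1
      -- the test valuation : everything true except r
      set γ₁ : FV → Option Bool := fun v => if v = rVar then some false else some true
        with hγ₁
      have hγ₁p : ∀ x : Fin n, γ₁ (pVar n x) = some true := by
        intro x
        simp only [hγ₁, if_neg (pVar_ne_rVar x)]
      have hγ₁r : γ₁ rVar = some false := by simp [hγ₁]
      have hvtrue : ∀ a b : Fin n,
          obval γ₁ (pVar n a) (pVar n b) rVar = some (Sum.inr true) := by
        intro a b
        simp [obval, hγ₁p]
      have hvfalse : ∀ a b : Fin n,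
          obval γ₁ (pVar n a) rVar (pVar n b) = some (Sum.inr false) := by
        intro a b
        simp [obval, hγ₁p, hγ₁r]
      have hEF : E i j = F k l := by
        have h1 := hsem' γ₁
        by_cases hEij : E i j <;> by_cases hFkl : F k l <;>
          simp only [hEij, hFkl, if_true, if_false, hvtrue, hvfalse] at h1 ⊢ <;> simp_all
      by_cases hEij : E i j
      · have hFkl : F k l = true := by rw [← hEF]; exact hEij
        have hsem'' : ∀ γ : FV → Option Bool,
            obval γ (pVar n i) (pVar n j) rVar =
              obval γ (pVar n (τ k)) (pVar n (τ l)) rVar := by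
          intro γ
          have h1 := hsem' γ
          rwa [if_pos hEij, if_pos (by rw [hFkl] : F k l = true)] at h1
        obtain ⟨ha, hb2, -⟩ :=
          condEq (pVar_ne_rVar j) (pVar_ne_rVar (τ l)) hsem''
        rw [← pVar_inj ha, ← pVar_inj hb2]
        rw [hFkl]
        exact hEij
      · have hFkl : F k l = false := by
          rw [← hEF]; exact Bool.not_eq_true _ ▸ (by simpa using hEij)
        have hsem'' : ∀ γ : FV → Option Bool,
            obval γ (pVar n i) rVar (pVar n j) =
              obval γ (pVar n (τ k)) rVar (pVar n (τ l)) := by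
          intro γ
          have h1 := hsem' γ
          rwa [if_neg hEij, if_neg (by rw [hFkl]; exact Bool.false_ne_true : ¬F k l = true)] at h1
        obtain ⟨ha, -, hc2⟩ :=
          condEq (Ne.symm (pVar_ne_rVar j)) (Ne.symm (pVar_ne_rVar (τ l))) hsem''
        rw [← pVar_inj ha, ← pVar_inj hc2]
        rw [hFkl]
        simpa using hEij
    · exfalso
      by_cases hFkl : F k l
      · refine dist_ff_obval (a := pVar n (τ k)) (b := pVar n (τ l)) (c := rVar)
          fun γ => ?_
        have h1 := hsem γ
        rwa [ev_ff, hevR γ, if_pos hFkl] at h1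
      · refine dist_ff_obval (a := pVar n (τ k)) (b := rVar) (c := pVar n (τ l))
          fun γ => ?_
        have h1 := hsem γ
        rwa [ev_ff, hevR γ, if_neg hFkl] at h1
  -- assemble the permutation
  have hbijτ : Function.Bijective τ := Finite.injective_iff_bijective.1 hτinj
  set τe := Equiv.ofBijective τ hbijτ with hτe
  refine ⟨τe.symm, fun i j => ?_⟩
  have h1 : τ (τe.symm i) = i := τe.apply_symm_apply i
  have h2 : τ (τe.symm j) = j := τe.apply_symm_apply j
  calc E i j = E (τ (τe.symm i)) (τ (τe.symm j)) := by rw [h1, h2]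
    _ = F (τe.symm i) (τe.symm j) := hmain _ _

end Stmt19Hard

/-- Intensional equivalence of propositional programs is at least
as hard as graph isomorphism: for the (explicit, polynomial-time computable)
coding `E ↦ prog(E)` of finite graphs by irreducible propositional programs, two
graphs on `n` nodes are isomorphic iff their codes are globally intensionally
equivalent, iff their codes are congruent. -/
theorem statement19 (n : ℕ) (E F : Fin n → Fin n → Bool) :
    ((∃ σ : Equiv.Perm (Fin n), ∀ i j, E i j = F (σ i) (σ j)) ↔
      GlobalIntEq (graphProg n E) (graphProg n F)) ∧
    (GlobalIntEq (graphProg n E) (graphProg n F) ↔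
      Congruent (graphProg n E) (graphProg n F)) := by
  constructor
  · constructor
    · rintro ⟨σ, hσ⟩
      exact congruent_to_gie (iso_to_congruent σ hσ)
    · exact gie_to_iso
  · constructor
    · intro h
      obtain ⟨σ, hσ⟩ := gie_to_iso h
      exact iso_to_congruent σ hσ
    · exact congruent_to_gie

end McCarthy
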